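/- arXiv:1807.06947 — 3 statements merged into one kernel-verified Lean document; each statement's English description precedes it below -/
import Mathlib

section
/- Let H be a k-uniform hypergraph with m hyperedges on an n-element vertex set, with n ≥ k ≥ t ≥ 1. Suppose that every k-element vertex subset that is not a hyperedge of H intersects some hyperedge of H in at least t vertices. Then m ≥ C(n, k)/(d + 1), where d = ∑_{a=1}^{k−t} C(k, k−a)·C(n−k, a). -/
/-- If every non-edge `k`-set intersects some hyperedge of a `k`-uniform hypergraph `H`
in at least `t` vertices, then `H` has at least `C(n,k)/(d+1)` hyperedges, where
`d = ∑_{a=1}^{k-t} C(k,k-a) * C(n-k,a)`. -/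
theorem stmt_6 {V : Type*} [Fintype V] [DecidableEq V] (n k t m : ℕ)
    (hn : Fintype.card V = n) (hkn : k ≤ n) (htk : t ≤ k) (ht : 1 ≤ t)
    (H : Finset (Finset V)) (hunif : ∀ e ∈ H, e.card = k) (hm : H.card = m)
    (hsat : ∀ e' : Finset V, e'.card = k → e' ∉ H → ∃ f ∈ H, t ≤ (e' ∩ f).card) :
    (n.choose k : ℝ) /
        ((∑ a ∈ Finset.Icc 1 (k - t), k.choose (k - a) * (n - k).choose a : ℕ) + 1) ≤ m := by
  classical
  set d : ℕ := ∑ a ∈ Finset.Icc 1 (k - t), k.choose (k - a) * (n - k).choose a with hd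
  set S : Finset (Finset V) := Finset.univ.powersetCard k with hSdef
  have hScard : S.card = n.choose k := by
    simp [hSdef, Finset.card_powersetCard, hn]
  -- sum identity
  have hsum : ∑ j ∈ Finset.Icc t k, k.choose j * (n - k).choose (k - j) = d + 1 := by
    have hre : ∑ j ∈ Finset.Icc t k, k.choose j * (n - k).choose (k - j)
        = ∑ a ∈ Finset.Icc 0 (k - t), k.choose (k - a) * (n - k).choose a := by
      refine Finset.sum_nbij' (fun j => k - j) (fun a => k - a) ?_ ?_ ?_ ?_ ?_
      · intro j hj; simp only [Finset.mem_Icc] at *; omega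
      · intro a ha; simp only [Finset.mem_Icc] at *; omega
      · intro j hj; simp only [Finset.mem_Icc] at hj; show k - (k - j) = j; omega
      · intro a ha; simp only [Finset.mem_Icc] at ha; show k - (k - a) = a; omega
      · intro j hj; simp only [Finset.mem_Icc] at hj
        have : k - (k - j) = j := by omega
        rw [this]
    rw [hre]
    have h0 : Finset.Icc 0 (k - t) = insert 0 (Finset.Icc 1 (k - t)) := by
      ext x; simp only [Finset.mem_Icc, Finset.mem_insert]; omega
    rw [h0, Finset.sum_insert (by simp)]
    simp [hd, Nat.add_comm]
  -- covering
  have hcov : S ⊆ H.biUnion (fun f => S.filter (fun e => t ≤ (e ∩ f).card)) := by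
    intro e he
    have he' : e.card = k := (Finset.mem_powersetCard.1 he).2
    by_cases heH : e ∈ H
    · refine Finset.mem_biUnion.2 ⟨e, heH, Finset.mem_filter.2 ⟨he, ?_⟩⟩
      simpa [he'] using htk
    · obtain ⟨f, hf, hft⟩ := hsat e he' heH
      exact Finset.mem_biUnion.2 ⟨f, hf, Finset.mem_filter.2 ⟨he, hft⟩⟩
  -- per-edge bound
  have hbound : ∀ f ∈ H, (S.filter (fun e => t ≤ (e ∩ f).card)).card ≤ d + 1 := by
    intro f hf
    have hfk : f.card = k := hunif f hf
    have hsub : S.filter (fun e => t ≤ (e ∩ f).card) ⊆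
        (Finset.Icc t k).biUnion (fun j => S.filter (fun e => (e ∩ f).card = j)) := by
      intro e he
      obtain ⟨heS, hte⟩ := Finset.mem_filter.1 he
      have he' : e.card = k := (Finset.mem_powersetCard.1 heS).2
      refine Finset.mem_biUnion.2 ⟨(e ∩ f).card, ?_, Finset.mem_filter.2 ⟨heS, rfl⟩⟩
      refine Finset.mem_Icc.2 ⟨hte, ?_⟩
      calc (e ∩ f).card ≤ e.card := Finset.card_le_card (Finset.inter_subset_left)
        _ = k := he'
    have hfiber : ∀ j ∈ Finset.Icc t k,
        (S.filter (fun e => (e ∩ f).card = j)).card ≤ k.choose j * (n - k).choose (k - j) := by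
      intro j hj
      have : (S.filter (fun e => (e ∩ f).card = j)).card ≤
          (f.powersetCard j ×ˢ fᶜ.powersetCard (k - j)).card := by
        apply Finset.card_le_card_of_injOn (fun e => (e ∩ f, e \ f))
        · intro e he
          obtain ⟨heS, hej⟩ := Finset.mem_filter.1 he
          have he' : e.card = k := (Finset.mem_powersetCard.1 heS).2
          refine Finset.mem_product.2 ⟨?_, ?_⟩
          · exact Finset.mem_powersetCard.2 ⟨Finset.inter_subset_right, hej⟩
          · refine Finset.mem_powersetCard.2 ⟨?_, ?_⟩
            · intro x hx
              simp only [Finset.mem_sdiff] at hx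
              simpa using hx.2
            · have h := Finset.card_inter_add_card_sdiff e f
              show (e \ f).card = k - j
              omega
        · intro e1 h1 e2 h2 hpair
          simp only [Prod.mk.injEq] at hpair
          have r1 : e1 ∩ f ∪ e1 \ f = e1 := by ext x; simp only [Finset.mem_union, Finset.mem_inter, Finset.mem_sdiff]; tauto
          have r2 : e2 ∩ f ∪ e2 \ f = e2 := by ext x; simp only [Finset.mem_union, Finset.mem_inter, Finset.mem_sdiff]; tauto
          rw [← r1, ← r2, hpair.1, hpair.2]
      refine this.trans ?_
      rw [Finset.card_product, Finset.card_powersetCard, Finset.card_powersetCard,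
        hfk, Finset.card_compl, hn, hfk]
    calc (S.filter (fun e => t ≤ (e ∩ f).card)).card
        ≤ ((Finset.Icc t k).biUnion (fun j => S.filter (fun e => (e ∩ f).card = j))).card :=
          Finset.card_le_card hsub
      _ ≤ ∑ j ∈ Finset.Icc t k, (S.filter (fun e => (e ∩ f).card = j)).card :=
          Finset.card_biUnion_le
      _ ≤ ∑ j ∈ Finset.Icc t k, k.choose j * (n - k).choose (k - j) :=
          Finset.sum_le_sum hfiber
      _ = d + 1 := hsum
  have key : n.choose k ≤ m * (d + 1) := by
    calc n.choose k = S.card := hScard.symm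
      _ ≤ (H.biUnion (fun f => S.filter (fun e => t ≤ (e ∩ f).card))).card :=
          Finset.card_le_card hcov
      _ ≤ ∑ f ∈ H, (S.filter (fun e => t ≤ (e ∩ f).card)).card := Finset.card_biUnion_le
      _ ≤ ∑ f ∈ H, (d + 1) := Finset.sum_le_sum hbound
      _ = m * (d + 1) := by rw [Finset.sum_const, hm, smul_eq_mul]
  have hpos : (0 : ℝ) < (d : ℝ) + 1 := by positivity
  rw [div_le_iff₀ hpos]
  exact_mod_cast key
end

section
/- Let F be an r-uniform hypergraph in which every hyperedge shares at least t vertices with some other hyperedge of F. Let k ≥ t and let H be a k-uniform hypergraph on n vertices (n ≥ k) such that H contains no Berge-F but adding any new k-set as a hyperedge creates a Berge-F. Then every k-set that is not a hyperedge of H intersects some hyperedge of H in at least t vertices; consequently |E(H)| ≥ C(n,k)/(1 + ∑_{a=1}^{k−t} C(k,k−a)C(n−k,a)) = Ω(n^t). -/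
/-- A `k`-uniform hypergraph `H` (on vertex set `V`) contains a Berge copy of the
`r`-uniform hypergraph `F` (on vertex set `W`): there is an injective placement of the
vertices of `F` and an injective assignment of hyperedges of `H` to the hyperedges of
`F`, each containing the image of its assigned edge. -/
def BergeCopy {W V : Type*} [DecidableEq V]
    (F : Finset (Finset W)) (H : Finset (Finset V)) : Prop :=
  ∃ ψ : W ↪ V, ∃ φ : {e // e ∈ F} → Finset V, Function.Injective φ ∧
    ∀ e : {e // e ∈ F}, φ e ∈ H ∧ ∀ w ∈ e.val, ψ w ∈ φ e

/-- If every hyperedge of `F` shares at least `t` vertices with another hyperedge of `F`,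
`k ≥ t`, and `H` is a Berge-`F`-saturated `k`-uniform hypergraph on `n` vertices, then
every non-edge `k`-set meets some hyperedge of `H` in at least `t` vertices, and
consequently `|E(H)| ≥ C(n,k)/(1 + ∑_{a=1}^{k-t} C(k,k-a) C(n-k,a))`. -/
theorem stmt_7 {W V : Type*} [Fintype W] [Fintype V] [DecidableEq W] [DecidableEq V]
    (r k t n : ℕ) (hrk : r < k) (htk : t ≤ k) (ht : 1 ≤ t)
    (hn : Fintype.card V = n) (hkn : k ≤ n)
    (F : Finset (Finset W)) (hFunif : ∀ e ∈ F, e.card = r)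
    (hshare : ∀ e ∈ F, ∃ f ∈ F, f ≠ e ∧ t ≤ (e ∩ f).card)
    (H : Finset (Finset V)) (hunif : ∀ e ∈ H, e.card = k)
    (hfree : ¬ BergeCopy F H)
    (hsat : ∀ e : Finset V, e.card = k → e ∉ H → BergeCopy F (insert e H)) :
    (∀ e : Finset V, e.card = k → e ∉ H → ∃ f ∈ H, t ≤ (e ∩ f).card) ∧
    (n.choose k : ℝ) /
        (1 + (∑ a ∈ Finset.Icc 1 (k - t), k.choose (k - a) * (n - k).choose a : ℕ)) ≤
      H.card := by
  classical
  have key : ∀ e : Finset V, e.card = k → e ∉ H → ∃ f ∈ H, t ≤ (e ∩ f).card := by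
    intro e he heH
    obtain ⟨ψ, φ, hinj, hφ⟩ := hsat e he heH
    by_cases hex : ∃ f₀ : {x // x ∈ F}, φ f₀ = e
    · obtain ⟨f₀, hf₀⟩ := hex
      obtain ⟨f₁, hf₁F, hne, hcard⟩ := hshare f₀.val f₀.2
      set f₁' : {x // x ∈ F} := ⟨f₁, hf₁F⟩ with hf₁'
      have hneq : φ f₁' ≠ e := by
        intro h
        apply hne
        have : f₁' = f₀ := hinj (h.trans hf₀.symm)
        exact congrArg Subtype.val this
      have hmem : φ f₁' ∈ H := by
        rcases Finset.mem_insert.mp (hφ f₁').1 with h | h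
        · exact absurd h hneq
        · exact h
      refine ⟨φ f₁', hmem, ?_⟩
      calc t ≤ (f₀.val ∩ f₁).card := hcard
        _ = ((f₀.val ∩ f₁).image ψ).card :=
            (Finset.card_image_of_injective _ ψ.injective).symm
        _ ≤ (e ∩ φ f₁').card := by
            apply Finset.card_le_card
            intro v hv
            obtain ⟨w, hw, rfl⟩ := Finset.mem_image.mp hv
            have hw0 := (Finset.mem_inter.mp hw).1
            have hw1 := (Finset.mem_inter.mp hw).2
            refine Finset.mem_inter.mpr ⟨?_, ?_⟩
            · rw [← hf₀]; exact (hφ f₀).2 _ hw0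
            · exact (hφ f₁').2 _ hw1
    · exfalso
      apply hfree
      refine ⟨ψ, φ, hinj, fun f => ⟨?_, (hφ f).2⟩⟩
      rcases Finset.mem_insert.mp (hφ f).1 with h | h
      · exact absurd ⟨f, h⟩ hex
      · exact h
  refine ⟨key, ?_⟩
  set S : Finset (Finset V) := Finset.univ.powersetCard k with hS
  have hScard : S.card = n.choose k := by
    rw [hS, Finset.card_powersetCard, Finset.card_univ, hn]
  set D : ℕ := ∑ a ∈ Finset.range (k - t + 1), k.choose (k - a) * (n - k).choose a with hD
  -- per-edge bound
  have hper : ∀ f ∈ H, (S.filter (fun e => t ≤ (e ∩ f).card)).card ≤ D := by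
    intro f hf
    have hfk : f.card = k := hunif f hf
    have hfc : ((Finset.univ : Finset V) \ f).card = n - k := by
      rw [Finset.card_sdiff_of_subset (Finset.subset_univ f), Finset.card_univ, hn, hfk]
    set T : Finset (Finset V × Finset V) :=
      (Finset.range (k - t + 1)).biUnion
        (fun a => (f.powersetCard (k - a)) ×ˢ ((Finset.univ \ f).powersetCard a)) with hT
    have hinto : ∀ e ∈ S.filter (fun e => t ≤ (e ∩ f).card), (e ∩ f, e \ f) ∈ T := by
      intro e heS
      rw [Finset.mem_filter] at heS
      obtain ⟨heS, hte⟩ := heS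
      have hek : e.card = k := (Finset.mem_powersetCard.mp heS).2
      have hsum : (e ∩ f).card + (e \ f).card = e.card :=
        Finset.card_inter_add_card_sdiff e f
      have hintk : (e ∩ f).card ≤ k := by omega
      rw [hT, Finset.mem_biUnion]
      refine ⟨(e \ f).card, ?_, ?_⟩
      · rw [Finset.mem_range]; omega
      · rw [Finset.mem_product]
        dsimp only
        constructor
        · rw [Finset.mem_powersetCard]
          exact ⟨Finset.inter_subset_right, by omega⟩
        · rw [Finset.mem_powersetCard]
          exact ⟨fun x hx => Finset.mem_sdiff.mpr
            ⟨Finset.mem_univ x, (Finset.mem_sdiff.mp hx).2⟩, rfl⟩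
    have hinj2 : Set.InjOn (fun e => (e ∩ f, e \ f))
        ↑(S.filter (fun e => t ≤ (e ∩ f).card)) := by
      intro e₁ _ e₂ _ h
      simp only [Prod.mk.injEq] at h
      have h1 : e₁ ∩ f ∪ e₁ \ f = e₂ ∩ f ∪ e₂ \ f := by rw [h.1, h.2]
      have h2 : ∀ e : Finset V, e ∩ f ∪ e \ f = e := by
        intro e; ext x
        simp only [Finset.mem_union, Finset.mem_inter, Finset.mem_sdiff]
        tauto
      rwa [h2, h2] at h1
    calc (S.filter (fun e => t ≤ (e ∩ f).card)).card ≤ T.card :=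
          Finset.card_le_card_of_injOn _ hinto hinj2
      _ ≤ ∑ a ∈ Finset.range (k - t + 1),
            ((f.powersetCard (k - a)) ×ˢ ((Finset.univ \ f).powersetCard a)).card :=
          Finset.card_biUnion_le
      _ ≤ D := by
          rw [hD]
          apply Finset.sum_le_sum
          intro a _
          rw [Finset.card_product, Finset.card_powersetCard, Finset.card_powersetCard,
            hfk, hfc]
  -- covering
  have hcover : S ⊆ H.biUnion (fun f => S.filter (fun e => t ≤ (e ∩ f).card)) := by
    intro e heS
    have hek : e.card = k := (Finset.mem_powersetCard.mp heS).2
    rw [Finset.mem_biUnion]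
    by_cases heH : e ∈ H
    · exact ⟨e, heH, Finset.mem_filter.mpr ⟨heS, by
        rw [Finset.inter_self, hek]; exact htk⟩⟩
    · obtain ⟨f, hfH, hft⟩ := key e hek heH
      exact ⟨f, hfH, Finset.mem_filter.mpr ⟨heS, hft⟩⟩
  have hcount : n.choose k ≤ H.card * D := by
    calc n.choose k = S.card := hScard.symm
      _ ≤ (H.biUnion (fun f => S.filter (fun e => t ≤ (e ∩ f).card))).card :=
          Finset.card_le_card hcover
      _ ≤ ∑ f ∈ H, (S.filter (fun e => t ≤ (e ∩ f).card)).card :=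
          Finset.card_biUnion_le
      _ ≤ ∑ _f ∈ H, D := Finset.sum_le_sum hper
      _ = H.card * D := by rw [Finset.sum_const, smul_eq_mul]
  have hDeq : D = 1 + ∑ a ∈ Finset.Icc 1 (k - t), k.choose (k - a) * (n - k).choose a := by
    have hr : Finset.range (k - t + 1) = insert 0 (Finset.Icc 1 (k - t)) := by
      ext x
      simp only [Finset.mem_range, Finset.mem_insert, Finset.mem_Icc]
      omega
    rw [hD, hr, Finset.sum_insert (by simp)]
    simp [Nat.choose_self]
  rw [hDeq] at hcount
  have hpos : (0:ℝ) <
      1 + (∑ a ∈ Finset.Icc 1 (k - t), k.choose (k - a) * (n - k).choose a : ℕ) := by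
    positivity
  rw [div_le_iff₀ hpos]
  exact_mod_cast hcount
end

section
/- Let 3 ≤ r < k < ℓ be integers. Every k-uniform hypergraph H on n vertices that contains no Berge-P_ℓ^{(r)} has at most (ℓ − r + 1)·C(ℓ, k)·C(n, r−1) hyperedges. -/
/-- The hyperedges of the `r`-uniform tight path on `ℓ` vertices: the sets of `r`
consecutive vertices. -/
def tightPath (r ℓ : ℕ) : Finset (Finset (Fin ℓ)) :=
  (Finset.range (ℓ - r + 1)).image fun i =>
    Finset.univ.filter fun v : Fin ℓ => i ≤ v.val ∧ v.val < i + r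

section Aux

variable {V : Type*} [Fintype V] [DecidableEq V]

/-- Degree of a vertex-set `S` in a hypergraph `G`. -/
def hdeg (S : Finset V) (G : Finset (Finset V)) : ℕ := (G.filter fun e => S ⊆ e).card

/-- A potential function used for the edge-deletion counting. -/
def pot (r D : ℕ) (G : Finset (Finset V)) : ℕ :=
  ∑ S ∈ Finset.univ.powersetCard r, min (hdeg S G) D

lemma hdeg_mono (S : Finset V) {G₁ G₂ : Finset (Finset V)} (h : G₁ ⊆ G₂) :
    hdeg S G₁ ≤ hdeg S G₂ :=
  Finset.card_le_card (Finset.filter_subset_filter _ h)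

lemma pot_le (r D : ℕ) (G : Finset (Finset V)) :
    pot r D G ≤ (Fintype.card V).choose r * D := by
  calc pot r D G ≤ (Finset.univ.powersetCard r : Finset (Finset V)).card * D := by
        have := Finset.sum_le_card_nsmul (Finset.univ.powersetCard r)
          (fun S => min (hdeg S G) D) D (fun x _ => min_le_right _ _)
        simpa [smul_eq_mul, pot] using this
    _ = (Fintype.card V).choose r * D := by
        rw [Finset.card_powersetCard, Finset.card_univ]

lemma exists_core (r D : ℕ) (G : Finset (Finset V)) :
    ∃ G', G' ⊆ G ∧ (∀ e ∈ G', ∀ S ⊆ e, S.card = r → D < hdeg S G') ∧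
      G.card + pot r D G' ≤ G'.card + pot r D G := by
  induction G using Finset.strongInduction with
  | _ G ih =>
    by_cases hgood : ∀ e ∈ G, ∀ S ⊆ e, S.card = r → D < hdeg S G
    · exact ⟨G, Finset.Subset.refl G, hgood, le_refl _⟩
    · push_neg at hgood
      obtain ⟨e, he, S, hSe, hScard, hdle⟩ := hgood
      obtain ⟨G', hsub, hgood', hineq⟩ := ih (G.erase e) (Finset.erase_ssubset he)
      refine ⟨G', hsub.trans (Finset.erase_subset _ _), hgood', ?_⟩
      have hmem : e ∈ G.filter fun e' => S ⊆ e' := Finset.mem_filter.mpr ⟨he, hSe⟩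
      have hde : hdeg S (G.erase e) + 1 = hdeg S G := by
        unfold hdeg
        rw [Finset.filter_erase]
        exact Finset.card_erase_add_one hmem
      have h1 : pot r D (G.erase e) < pot r D G := by
        apply Finset.sum_lt_sum
        · intro i _
          exact min_le_min (hdeg_mono i (Finset.erase_subset _ _)) (le_refl D)
        · refine ⟨S, ?_, ?_⟩
          · rw [Finset.mem_powersetCard]
            exact ⟨Finset.subset_univ _, hScard⟩
          · omega
      have h2 : G.card = (G.erase e).card + 1 := (Finset.card_erase_add_one he).symm
      omega

lemma build_path (r k ℓ : ℕ) (hr : 3 ≤ r) (hrk : r < k) (hkl : k < ℓ)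
    (G : Finset (Finset V)) (hG : G.Nonempty)
    (hunif : ∀ e ∈ G, e.card = k)
    (hgood : ∀ e ∈ G, ∀ S ⊆ e, S.card = r - 1 →
      (ℓ - r + 1) * ℓ.choose k < hdeg S G) :
    ∀ m, r ≤ m → m ≤ ℓ →
      ∃ (v : ℕ → V) (f : ℕ → Finset V),
        (∀ a < m, ∀ b < m, v a = v b → a = b) ∧
        (∀ a < m - r + 1, ∀ b < m - r + 1, f a = f b → a = b) ∧
        (∀ i < m - r + 1, f i ∈ G ∧ ∀ j, i ≤ j → j < i + r → v j ∈ f i) := by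
  intro m hrm
  induction m, hrm using Nat.le_induction with
  | base =>
    intro _
    obtain ⟨e₀, he₀⟩ := hG
    have hk0 : e₀.card = k := hunif e₀ he₀
    obtain ⟨t, hts, htc⟩ := Finset.exists_subset_card_eq (show r ≤ e₀.card by omega)
    have htne : t.Nonempty := by rw [← Finset.card_pos, htc]; omega
    obtain ⟨y, hy⟩ := htne
    set eqv := t.equivFin with heqv
    set v : ℕ → V := fun j => if h : j < t.card then ((eqv.symm ⟨j, h⟩ : t) : V) else y
      with hvdef
    have hvt : ∀ j, v j ∈ t := by
      intro j
      rw [hvdef]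
      by_cases h : j < t.card
      · simp only [dif_pos h]
        exact (eqv.symm ⟨j, h⟩).2
      · simp only [dif_neg h]
        exact hy
    refine ⟨v, fun _ => e₀, ?_, ?_, ?_⟩
    · intro a ha b hb hab
      have ha' : a < t.card := by omega
      have hb' : b < t.card := by omega
      rw [hvdef] at hab
      simp only [dif_pos ha', dif_pos hb'] at hab
      have := eqv.symm.injective (Subtype.coe_injective hab)
      simpa using this
    · intro a ha b hb _
      omega
    · intro i hi
      refine ⟨he₀, ?_⟩
      intro j h1 h2
      exact hts (hvt j)
  | succ m hrm ih =>
    intro hmℓ1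
    have hmℓ : m ≤ ℓ := by omega
    obtain ⟨v, f, hv, hf, hwin⟩ := ih hmℓ
    set D := (ℓ - r + 1) * ℓ.choose k with hD
    set S : Finset V := (Finset.Ico (m - r + 1) m).image v with hS
    set Vm : Finset V := (Finset.range m).image v with hVm
    have hfm := hwin (m - r) (by omega)
    have hSsub : S ⊆ f (m - r) := by
      intro x hx
      rw [hS, Finset.mem_image] at hx
      obtain ⟨j, hj, rfl⟩ := hx
      rw [Finset.mem_Ico] at hj
      exact hfm.2 j (by omega) (by omega)
    have hScard : S.card = r - 1 := by
      rw [hS, Finset.card_image_of_injOn, Nat.card_Ico]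
      · omega
      · intro a ha b hb hab
        rw [Finset.coe_Ico, Set.mem_Ico] at ha hb
        exact hv a (by omega) b (by omega) hab
    have hdegS : D < hdeg S G := hgood (f (m - r)) hfm.1 S hSsub hScard
    set B1 : Finset (Finset V) := (Finset.range (m - r + 1)).image f with hB1
    set B2 : Finset (Finset V) := G.filter (fun e => S ⊆ e ∧ e ⊆ Vm) with hB2
    have hB1c : B1.card ≤ m - r + 1 := by
      rw [hB1]
      exact Finset.card_image_le.trans (by rw [Finset.card_range])
    have hVmcard : Vm.card = m := by
      rw [hVm, Finset.card_image_of_injOn, Finset.card_range]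
      intro a ha b hb hab
      rw [Finset.coe_range, Set.mem_Iio] at ha hb
      exact hv a ha b hb hab
    have hSVm : S ⊆ Vm := by
      rw [hS, hVm]
      apply Finset.image_subset_image
      intro x hx
      rw [Finset.mem_Ico] at hx
      rw [Finset.mem_range]
      omega
    have hB2c : B2.card ≤ (ℓ - r).choose (k - r + 1) := by
      have h1 : B2.card ≤ ((Vm \ S).powersetCard (k - r + 1)).card := by
        apply Finset.card_le_card_of_injOn (fun e => e \ S)
        · intro e hee
          rw [hB2, Finset.mem_coe, Finset.mem_filter] at hee
          obtain ⟨heG, hSe, heVm⟩ := hee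
          rw [Finset.mem_coe, Finset.mem_powersetCard]
          constructor
          · exact Finset.sdiff_subset_sdiff heVm (Finset.Subset.refl S)
          · rw [Finset.card_sdiff_of_subset hSe, hunif e heG, hScard]
            omega
        · intro e1 he1 e2 he2 heq
          rw [Finset.mem_coe, Finset.mem_filter] at he1 he2
          have h1 : S ⊆ e1 := he1.2.1
          have h2 : S ⊆ e2 := he2.2.1
          dsimp only at heq
          calc e1 = e1 \ S ∪ S := (Finset.sdiff_union_of_subset h1).symm
            _ = e2 \ S ∪ S := by rw [heq]
            _ = e2 := Finset.sdiff_union_of_subset h2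
      have h2 : ((Vm \ S).powersetCard (k - r + 1)).card = (m - r + 1).choose (k - r + 1) := by
        rw [Finset.card_powersetCard, Finset.card_sdiff_of_subset hSVm, hVmcard, hScard]
        congr 1
        omega
      rw [h2] at h1
      exact h1.trans (Nat.choose_le_choose _ (by omega))
    have hCpos : 0 < ℓ.choose k := Nat.choose_pos (by omega)
    have hCC : (ℓ - r).choose (k - r + 1) ≤ ℓ.choose k := by
      have e1 : (ℓ - r).choose (k - r + 1) = (ℓ - r).choose (ℓ - k - 1) := by
        have h := Nat.choose_symm (show k - r + 1 ≤ ℓ - r by omega)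
        have h2 : ℓ - r - (k - r + 1) = ℓ - k - 1 := by omega
        rw [h2] at h
        exact h.symm
      have e2 : (ℓ - 1).choose (ℓ - k - 1) = (ℓ - 1).choose k := by
        have h := Nat.choose_symm (show k ≤ ℓ - 1 by omega)
        have h2 : ℓ - 1 - k = ℓ - k - 1 := by omega
        rw [h2] at h
        exact h
      calc (ℓ - r).choose (k - r + 1) = (ℓ - r).choose (ℓ - k - 1) := e1
        _ ≤ (ℓ - 1).choose (ℓ - k - 1) := Nat.choose_le_choose _ (by omega)
        _ = (ℓ - 1).choose k := e2
        _ ≤ ℓ.choose k := Nat.choose_le_choose _ (by omega)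
    have hDB : B1.card + B2.card < hdeg S G := by
      have hmul : ℓ - r ≤ (ℓ - r) * ℓ.choose k := Nat.le_mul_of_pos_right _ hCpos
      have hDsplit : D = (ℓ - r) * ℓ.choose k + ℓ.choose k := by
        rw [hD, Nat.succ_mul]
      omega
    have hdd : hdeg S G = (G.filter fun e => S ⊆ e).card := rfl
    have hex : ∃ en ∈ G.filter (fun e => S ⊆ e), en ∉ B1 ∪ B2 := by
      by_contra hc
      push_neg at hc
      have hsub2 : G.filter (fun e => S ⊆ e) ⊆ B1 ∪ B2 := hc
      have hc1 := Finset.card_le_card hsub2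
      have hc2 := Finset.card_union_le B1 B2
      omega
    obtain ⟨en, hen, hennot⟩ := hex
    rw [Finset.mem_filter] at hen
    obtain ⟨henG, hSen⟩ := hen
    rw [Finset.mem_union, not_or] at hennot
    obtain ⟨hnB1, hnB2⟩ := hennot
    have hfne : ∀ i, i < m - r + 1 → f i ≠ en := by
      intro i hi hEq
      exact hnB1 (by rw [hB1]; exact Finset.mem_image.mpr ⟨i, Finset.mem_range.mpr hi, hEq⟩)
    have hnotVm : ¬ en ⊆ Vm := by
      intro hsub3
      exact hnB2 (by rw [hB2, Finset.mem_filter]; exact ⟨henG, hSen, hsub3⟩)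
    obtain ⟨x, hxen, hxVm⟩ := Finset.not_subset.mp hnotVm
    have hvVm : ∀ j, j < m → v j ∈ Vm := by
      intro j hj
      rw [hVm]
      exact Finset.mem_image.mpr ⟨j, Finset.mem_range.mpr hj, rfl⟩
    refine ⟨Function.update v m x, Function.update f (m - r + 1) en, ?_, ?_, ?_⟩
    · intro a ha b hb hab
      by_cases ham : a = m <;> by_cases hbm : b = m
      · omega
      · exfalso
        rw [ham, Function.update_self, Function.update_of_ne hbm] at hab
        exact hxVm (hab ▸ hvVm b (by omega))
      · exfalso
        rw [hbm, Function.update_self, Function.update_of_ne ham] at hab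
        exact hxVm (hab.symm ▸ hvVm a (by omega))
      · rw [Function.update_of_ne ham, Function.update_of_ne hbm] at hab
        exact hv a (by omega) b (by omega) hab
    · intro a ha b hb hab
      have ha' : a < m - r + 2 := by omega
      have hb' : b < m - r + 2 := by omega
      by_cases ham : a = m - r + 1 <;> by_cases hbm : b = m - r + 1
      · omega
      · exfalso
        rw [ham, Function.update_self, Function.update_of_ne hbm] at hab
        exact hfne b (by omega) hab.symm
      · exfalso
        rw [hbm, Function.update_self, Function.update_of_ne ham] at hab
        exact hfne a (by omega) hab
      · rw [Function.update_of_ne ham, Function.update_of_ne hbm] at hab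
        exact hf a (by omega) b (by omega) hab
    · intro i hi
      by_cases hieq : i = m - r + 1
      · rw [hieq, Function.update_self]
        refine ⟨henG, ?_⟩
        intro j hj1 hj2
        by_cases hjm : j = m
        · rw [hjm, Function.update_self]
          exact hxen
        · rw [Function.update_of_ne hjm]
          apply hSen
          rw [hS]
          exact Finset.mem_image.mpr ⟨j, Finset.mem_Ico.mpr ⟨by omega, by omega⟩, rfl⟩
      · have hilt : i < m - r + 1 := by omega
        rw [Function.update_of_ne hieq]
        obtain ⟨h1, h2⟩ := hwin i hilt
        refine ⟨h1, ?_⟩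
        intro j hj1 hj2
        have hjm : j ≠ m := by omega
        rw [Function.update_of_ne hjm]
        exact h2 j hj1 hj2

end Aux

/-- A `k`-uniform hypergraph on `n` vertices with no Berge tight path `P_ℓ^{(r)}`
has at most `(ℓ - r + 1) * C(ℓ,k) * C(n,r-1)` hyperedges. -/
theorem stmt_9 {V : Type*} [Fintype V] [DecidableEq V] (r k ℓ n : ℕ)
    (hr : 3 ≤ r) (hrk : r < k) (hkl : k < ℓ)
    (hn : Fintype.card V = n)
    (H : Finset (Finset V)) (hunif : ∀ e ∈ H, e.card = k)
    (hfree : ¬ BergeCopy (tightPath r ℓ) H) :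
    H.card ≤ (ℓ - r + 1) * ℓ.choose k * n.choose (r - 1) := by
  classical
  obtain ⟨G', hsub, hgood, hineq⟩ := exists_core (r - 1) ((ℓ - r + 1) * ℓ.choose k) H
  by_cases hne : G'.Nonempty
  · exfalso
    apply hfree
    obtain ⟨v, f, hv, hf, hwin⟩ := build_path r k ℓ hr hrk hkl G' hne
      (fun e he => hunif e (hsub he)) hgood ℓ (by omega) (le_refl ℓ)
    have hidx : ∀ e : {e // e ∈ tightPath r ℓ}, ∃ i, i < ℓ - r + 1 ∧
        e.val = Finset.univ.filter (fun w : Fin ℓ => i ≤ w.val ∧ w.val < i + r) := by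
      intro e
      obtain ⟨i, hi, hei⟩ := Finset.mem_image.mp e.2
      exact ⟨i, Finset.mem_range.mp hi, hei.symm⟩
    choose idx hidx1 hidx2 using hidx
    unfold BergeCopy
    refine ⟨⟨fun w => v w.val, ?_⟩, fun e => f (idx e), ?_, ?_⟩
    · intro a b hab
      exact Fin.ext (hv a.val a.isLt b.val b.isLt hab)
    · intro a b hab
      have := hf (idx a) (hidx1 a) (idx b) (hidx1 b) hab
      apply Subtype.ext
      rw [hidx2 a, hidx2 b, this]
    · intro e
      obtain ⟨h1, h2⟩ := hwin (idx e) (hidx1 e)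
      refine ⟨hsub h1, ?_⟩
      intro w hw
      rw [hidx2 e, Finset.mem_filter] at hw
      exact h2 w.val hw.2.1 hw.2.2
  · rw [Finset.not_nonempty_iff_eq_empty] at hne
    rw [hne] at hineq
    have h1 : pot (r - 1) ((ℓ - r + 1) * ℓ.choose k) (∅ : Finset (Finset V)) = 0 := by
      simp [pot, hdeg]
    have h2 := pot_le (r - 1) ((ℓ - r + 1) * ℓ.choose k) H
    rw [hn] at h2
    have h3 : (ℓ - r + 1) * ℓ.choose k * n.choose (r - 1)
        = n.choose (r - 1) * ((ℓ - r + 1) * ℓ.choose k) := by ring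
    simp only [Finset.card_empty] at hineq
    omega
end
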